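/- For every N ≥ 1, every β > 0, J > 0, and every real number m̃, the Curie–Weiss pressure satisfies the lower bound (1/N) ln Z_N(β) ≥ ln 2 + ln cosh(βJ m̃) − (βJ/2) m̃². -/

import Mathlib

open Real

/-- The value of a spin: `true ↦ 1`, `false ↦ -1`. -/
noncomputable def spin (b : Bool) : ℝ := if b then 1 else -1

/-- The magnetization per spin of a configuration `σ ∈ {-1,1}^N`. -/
noncomputable def mag (N : ℕ) (σ : Fin N → Bool) : ℝ := (1 / (N : ℝ)) * ∑ i, spin (σ i)

/-- The Curie–Weiss partition function `Z_N(β) = ∑_σ exp((βJN/2) m(σ)²)`. -/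
noncomputable def Zcw (N : ℕ) (J β : ℝ) : ℝ :=
  ∑ σ : Fin N → Bool, Real.exp (β * J * (N : ℝ) / 2 * (mag N σ) ^ 2)

lemma two_cosh_pow (c : ℝ) (N : ℕ) :
    (2 * Real.cosh c) ^ N = ∑ σ : Fin N → Bool, ∏ i, Real.exp (c * spin (σ i)) := by
  have h2 : 2 * Real.cosh c = ∑ b : Bool, Real.exp (c * spin b) := by
    simp [Real.cosh_eq, spin]
    ring
  rw [h2, Fintype.sum_pow]

theorem cw_lower_bound (N : ℕ) (hN : 1 ≤ N) (β J : ℝ) (hβ : 0 < β) (hJ : 0 < J) (mt : ℝ) :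
    (1 / (N : ℝ)) * Real.log (Zcw N J β) ≥
      Real.log 2 + Real.log (Real.cosh (β * J * mt)) - β * J / 2 * mt ^ 2 := by
  set c := β * J * mt with hc
  have hNpos : (0 : ℝ) < N := by exact_mod_cast hN
  have hbJ : 0 < β * J := mul_pos hβ hJ
  have key : ∀ σ : Fin N → Bool,
      Real.exp (c * ∑ i, spin (σ i) - β * J * N / 2 * mt ^ 2)
        ≤ Real.exp (β * J * (N : ℝ) / 2 * (mag N σ) ^ 2) := by
    intro σ
    apply Real.exp_le_exp.mpr
    have hm : (∑ i, spin (σ i)) = N * mag N σ := by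
      rw [mag, ← mul_assoc, mul_one_div_cancel hNpos.ne', one_mul]
    rw [hm]
    have hsq : 0 ≤ β * J * N / 2 * (mag N σ - mt) ^ 2 :=
      mul_nonneg (by positivity) (sq_nonneg _)
    rw [hc]; nlinarith [hsq]
  have hZ : Real.exp (-(β * J * N / 2 * mt ^ 2)) * (2 * Real.cosh c) ^ N ≤ Zcw N J β := by
    rw [two_cosh_pow, Finset.mul_sum]
    apply Finset.sum_le_sum
    intro σ _
    rw [← Real.exp_sum, ← Real.exp_add]
    have : (-(β * J * N / 2 * mt ^ 2) + ∑ i, c * spin (σ i))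
        = c * ∑ i, spin (σ i) - β * J * N / 2 * mt ^ 2 := by
      rw [Finset.mul_sum]; ring
    rw [this]
    exact key σ
  have hcoshpos : 0 < Real.cosh c := Real.cosh_pos c
  have hlhspos : 0 < Real.exp (-(β * J * N / 2 * mt ^ 2)) * (2 * Real.cosh c) ^ N := by
    positivity
  have hlog : Real.log (Real.exp (-(β * J * N / 2 * mt ^ 2)) * (2 * Real.cosh c) ^ N)
      ≤ Real.log (Zcw N J β) := Real.log_le_log hlhspos hZ
  rw [Real.log_mul (ne_of_gt (Real.exp_pos _)) (ne_of_gt (by positivity)),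
      Real.log_exp, Real.log_pow, Real.log_mul two_ne_zero (ne_of_gt hcoshpos)] at hlog
  rw [ge_iff_le]
  calc Real.log 2 + Real.log (Real.cosh c) - β * J / 2 * mt ^ 2
      = (-(β * J * ↑N / 2 * mt ^ 2) + ↑N * (Real.log 2 + Real.log (Real.cosh c))) / N := by
        field_simp; ring
    _ ≤ Real.log (Zcw N J β) / N := div_le_div_of_nonneg_right hlog hNpos.le
    _ = 1 / N * Real.log (Zcw N J β) := by ring
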